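/- Let R be an object unital G-graded ring. The map η : R → R·END_R(R) defined by η(r)(x) = x r is an isomorphism of (R,R)-bimodules, where END_R(R) = HOM_R(R,R) carries the left R-action (r·f)(x) = f(xr) and the right R-action (f·r)(x) = f(x)r. -/

import Mathlib

open CategoryTheory

/-- The arrows of a groupoid, bundled with their endpoints. -/
abbrev GArrow (G : Type*) [Groupoid G] := Σ a b : G, a ⟶ b

namespace GArrow

variable {G : Type*} [Groupoid G]

/-- The unit arrow at an object. -/
def unit (a : G) : GArrow G := ⟨a, a, 𝟙 a⟩

/-- The inverse arrow `σ⁻¹`. -/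
def ginv (σ : GArrow G) : GArrow G := ⟨σ.2.1, σ.1, Groupoid.inv σ.2.2⟩

/-- `Composable σ τ` means `d(σ) = r(τ)`, i.e. the product `στ` is defined. -/
def Composable (σ τ : GArrow G) : Prop := σ.1 = τ.2.1

/-- The product `στ` when `d(σ) = r(τ)`. -/
def comp (σ τ : GArrow G) (h : Composable σ τ) : GArrow G :=
  ⟨τ.1, σ.2.1, τ.2.2 ≫ eqToHom h.symm ≫ σ.2.2⟩

/-- The unit space `G₀`, as a set of arrows. -/
def GUnits (G : Type*) [Groupoid G] : Set (GArrow G) := Set.range unit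

/-- The product of two sets of arrows: `Σ * Σ' = { στ : σ ∈ Σ, τ ∈ Σ', d(σ) = r(τ) }`. -/
def setMul (A B : Set (GArrow G)) : Set (GArrow G) :=
  {ρ | ∃ σ ∈ A, ∃ τ ∈ B, ∃ h : Composable σ τ, ρ = comp σ τ h}

end GArrow

/-- An object unital `G`-grading on an associative, not necessarily unital, ring `R`:
`R = ⊕_{σ ∈ G} R_σ`, `R_σ R_τ ⊆ R_{στ}` for composable pairs, `R_σ R_τ = 0` otherwise,
each `R_e` (`e ∈ G₀`) is unital with identity `u e`, and
`1_{R_{r(σ)}} r = r 1_{R_{d(σ)}} = r` for every `r ∈ R_σ`. -/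
structure OUGrading (G : Type*) [Groupoid G] (R : Type*) [NonUnitalRing R] where
  component : GArrow G → AddSubgroup R
  sup_eq_top : (⨆ σ : GArrow G, component σ) = ⊤
  indep : iSupIndep component
  mul_mem : ∀ (σ τ : GArrow G) (h : GArrow.Composable σ τ), ∀ r ∈ component σ,
    ∀ s ∈ component τ, r * s ∈ component (GArrow.comp σ τ h)
  mul_eq_zero : ∀ (σ τ : GArrow G), ¬ GArrow.Composable σ τ → ∀ r ∈ component σ,
    ∀ s ∈ component τ, r * s = 0
  /-- The identity of the unital ring `R_e`, for each object (unit) `e`. -/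
  u : G → R
  u_mem : ∀ a : G, u a ∈ component (GArrow.unit a)
  u_left : ∀ σ : GArrow G, ∀ r ∈ component σ, u σ.2.1 * r = r
  u_right : ∀ σ : GArrow G, ∀ r ∈ component σ, r * u σ.1 = r

/-- The axioms of a left module over a not necessarily unital ring. -/
structure NUModule (R M : Type*) [NonUnitalRing R] [AddCommGroup M] [SMul R M] : Prop where
  smul_add : ∀ (r : R) (m n : M), r • (m + n) = r • m + r • n
  add_smul : ∀ (r s : R) (m : M), (r + s) • m = r • m + s • m
  mul_smul : ∀ (r s : R) (m : M), (r * s) • m = r • (s • m)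

/-- A `G`-graded left module over a ring `R` with object unital `G`-grading `gr`. -/
structure GrModule {G : Type*} [Groupoid G] {R : Type*} [NonUnitalRing R]
    (gr : OUGrading G R) (M : Type*) [AddCommGroup M] [SMul R M] where
  smul_add : ∀ (r : R) (m n : M), r • (m + n) = r • m + r • n
  add_smul : ∀ (r s : R) (m : M), (r + s) • m = r • m + s • m
  mul_smul : ∀ (r s : R) (m : M), (r * s) • m = r • (s • m)
  component : GArrow G → AddSubgroup M
  sup_eq_top : (⨆ σ : GArrow G, component σ) = ⊤
  indep : iSupIndep component
  smul_mem : ∀ (σ τ : GArrow G) (h : GArrow.Composable σ τ), ∀ r ∈ gr.component σ,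
    ∀ m ∈ component τ, r • m ∈ component (GArrow.comp σ τ h)
  smul_eq_zero : ∀ (σ τ : GArrow G), ¬ GArrow.Composable σ τ → ∀ r ∈ gr.component σ,
    ∀ m ∈ component τ, r • m = 0

/-- A graded module is graded unital if `1_{R_{r(σ)}} • m = m` for all homogeneous `m`
of degree `σ`. -/
def GrModule.IsUnital {G : Type*} [Groupoid G] {R : Type*} [NonUnitalRing R]
    {gr : OUGrading G R} {M : Type*} [AddCommGroup M] [SMul R M]
    (gm : GrModule gr M) : Prop :=
  ∀ σ : GArrow G, ∀ m ∈ gm.component σ, gr.u σ.2.1 • m = m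

/-- A graded homomorphism between graded modules with homogeneous components `cM`, `cN`. -/
def IsGrHom {G : Type*} [Groupoid G] {R : Type*} [NonUnitalRing R]
    {M N : Type*} [AddCommGroup M] [AddCommGroup N] [SMul R M] [SMul R N]
    (cM : GArrow G → AddSubgroup M) (cN : GArrow G → AddSubgroup N) (f : M → N) : Prop :=
  (∀ x y : M, f (x + y) = f x + f y) ∧ (∀ (r : R) (x : M), f (r • x) = r • f x) ∧
    (∀ σ : GArrow G, ∀ x ∈ cM σ, f x ∈ cN σ)

/-- A graded submodule: an additive subgroup closed under the `R`-action which is the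
sum of its homogeneous components. -/
def IsGrSubmodule {G : Type*} [Groupoid G] {R : Type*} [NonUnitalRing R]
    {gr : OUGrading G R} {M : Type*} [AddCommGroup M] [SMul R M]
    (gm : GrModule gr M) (N : AddSubgroup M) : Prop :=
  (∀ (r : R), ∀ m ∈ N, r • m ∈ N) ∧ N = ⨆ σ : GArrow G, (N ⊓ gm.component σ)

open Classical in
/-- The homogeneous component of degree `τ` of the `σ'`-suspension `R(σ')`:
`R(σ')_τ = R_{τσ'}` if `(τ, σ')` is composable and `{0}` otherwise. -/
noncomputable def suspComponent {G : Type*} [Groupoid G] {R : Type*} [NonUnitalRing R]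
    (gr : OUGrading G R) (σ' τ : GArrow G) : AddSubgroup R :=
  if h : GArrow.Composable τ σ' then gr.component (GArrow.comp τ σ' h) else ⊥

/-- The `σ'`-suspension `R(σ') = ⊕_τ R(σ')_τ` of `R`, as an additive subgroup of `R`. -/
noncomputable def suspension {G : Type*} [Groupoid G] {R : Type*} [NonUnitalRing R]
    (gr : OUGrading G R) (σ' : GArrow G) : AddSubgroup R :=
  ⨆ τ : GArrow G, suspComponent gr σ' τ

/-- A graded homomorphism from a graded left ideal `S` of `R` (with homogeneous
components `cS`) to a graded module with components `cN`. -/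
def IsGrHomOn {G : Type*} [Groupoid G] {R N : Type*} [NonUnitalRing R]
    [AddCommGroup N] [SMul R N] {S : AddSubgroup R}
    (cS : GArrow G → AddSubgroup R) (cN : GArrow G → AddSubgroup N) (f : ↥S → N) : Prop :=
  (∀ x y : ↥S, f (x + y) = f x + f y) ∧
  (∀ (r : R) (x y : ↥S), (y : R) = r * (x : R) → f y = r • f x) ∧
  (∀ τ : GArrow G, ∀ x : ↥S, (x : R) ∈ cS τ → f x ∈ cN τ)

/-- A graded module is free by suspension if it is the internal direct sum of graded
submodules, each gradedly isomorphic to a suspension `R(σᵢ)` of `R`. -/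
noncomputable def FreeBySuspension {G : Type*} [Groupoid G] {R : Type*} [NonUnitalRing R]
    {gr : OUGrading G R} {M : Type*} [AddCommGroup M] [SMul R M]
    (gm : GrModule gr M) : Prop :=
  ∃ (ι : Type*) (σs : ι → GArrow G) (f : ∀ i : ι, ↥(suspension gr (σs i)) → M),
    (∀ i : ι, IsGrHomOn (suspComponent gr (σs i)) gm.component (f i)) ∧
    (∀ i : ι, Function.Injective (f i)) ∧
    iSupIndep (fun i : ι => AddSubgroup.closure (Set.range (f i))) ∧
    (⨆ i : ι, AddSubgroup.closure (Set.range (f i))) = ⊤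

/-- The set of graded homomorphisms `R → N` of degree `σ`. -/
def HomDeg {G : Type*} [Groupoid G] {R N : Type*} [NonUnitalRing R]
    [AddCommGroup N] [SMul R N] (gr : OUGrading G R)
    (cN : GArrow G → AddSubgroup N) (σ : GArrow G) : Set (R → N) :=
  {f | (∀ x y : R, f (x + y) = f x + f y) ∧ (∀ r x : R, f (r * x) = r • f x) ∧
    (∀ (τ : GArrow G) (h : GArrow.Composable τ σ), ∀ x ∈ gr.component τ,
        f x ∈ cN (GArrow.comp τ σ h)) ∧
    (∀ τ : GArrow G, ¬ GArrow.Composable τ σ → ∀ x ∈ gr.component τ, f x = 0)}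

/-- `HOM_R(R, N) = ⊕_σ HOM_R(R, N)_σ`, the additive group generated by the graded
homomorphisms of some degree. -/
def HOM {G : Type*} [Groupoid G] {R N : Type*} [NonUnitalRing R]
    [AddCommGroup N] [SMul R N] (gr : OUGrading G R)
    (cN : GArrow G → AddSubgroup N) : AddSubgroup (R → N) :=
  AddSubgroup.closure (⋃ σ : GArrow G, HomDeg gr cN σ)

/-- The left `R`-action `(r · f)(x) = f(x r)` on maps `R → N`. -/
def rAct {R N : Type*} [NonUnitalRing R] (r : R) (f : R → N) : R → N :=
  fun x => f (x * r)

/-- `R · HOM_R(R, N)`, the unitary part of `HOM_R(R, N)` under the action `rAct`. -/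
def RHOM {G : Type*} [Groupoid G] {R N : Type*} [NonUnitalRing R]
    [AddCommGroup N] [SMul R N] (gr : OUGrading G R)
    (cN : GArrow G → AddSubgroup N) : AddSubgroup (R → N) :=
  AddSubgroup.closure {g | ∃ (r : R), ∃ f ∈ HOM gr cN, g = rAct r f}

/-- A bundled graded unital left `R`-module. -/
structure GrUMod {G : Type*} [Groupoid G] {R : Type*} [NonUnitalRing R]
    (gr : OUGrading G R) where
  carrier : Type*
  [acg : AddCommGroup carrier]
  [sm : SMul R carrier]
  str : GrModule gr carrier
  unital : str.IsUnital

attribute [instance] GrUMod.acg GrUMod.sm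

section Aux

variable {G R : Type*} [Groupoid G] [NonUnitalRing R] (gr : OUGrading G R)

/-- `η` as an additive map. -/
def etaHom : R →+ (R → R) where
  toFun r := fun x => x * r
  map_zero' := by funext x; simp
  map_add' r s := by funext x; simp [mul_add]

/-- Every element of `R` is a finite sum of homogeneous elements. -/
theorem exists_decomp (t : R) : ∃ (s : Finset (GArrow G)) (c : GArrow G → R),
    (∀ σ, c σ ∈ gr.component σ) ∧ t = ∑ σ ∈ s, c σ := by
  classical
  have ht : t ∈ ⨆ σ : GArrow G, gr.component σ := by rw [gr.sup_eq_top]; trivial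
  rw [AddSubgroup.iSup_eq_closure] at ht
  induction ht using AddSubgroup.closure_induction with
  | mem x hx =>
    obtain ⟨_, ⟨σ, rfl⟩, hxσ⟩ := hx
    refine ⟨{σ}, fun τ => if h : τ = σ then x else 0, fun τ => ?_, by simp⟩
    by_cases h : τ = σ
    · subst h; simpa using hxσ
    · simp only [dif_neg h]; exact zero_mem _
  | zero => exact ⟨∅, 0, fun σ => (gr.component σ).zero_mem, by simp⟩
  | add a b _ _ ha hb =>
    obtain ⟨s1, c1, h1, rfl⟩ := ha
    obtain ⟨s2, c2, h2, rfl⟩ := hb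
    refine ⟨s1 ∪ s2,
      fun τ => (if τ ∈ s1 then c1 τ else 0) + (if τ ∈ s2 then c2 τ else 0),
      fun τ => add_mem (by split <;> first | exact h1 τ | exact zero_mem _) (by split <;> first | exact h2 τ | exact zero_mem _), ?_⟩
    rw [Finset.sum_add_distrib, Finset.sum_ite_mem, Finset.sum_ite_mem,
      Finset.union_inter_cancel_left, Finset.union_inter_cancel_right]
  | neg a _ ha =>
    obtain ⟨s, c, hc, rfl⟩ := ha
    exact ⟨s, fun τ => -(c τ), fun τ => neg_mem (hc τ), by simp⟩

include gr in
/-- Left multiplication is faithful. -/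
theorem eq_zero_of_forall_mul (t : R) (h : ∀ x : R, x * t = 0) : t = 0 := by
  classical
  obtain ⟨s, c, hc, rfl⟩ := exists_decomp gr t
  set A : Finset G := s.image (fun σ => σ.2.1) with hA
  have key : ∀ σ ∈ s, ∑ a ∈ A, gr.u a * c σ = c σ := by
    intro σ hσ
    rw [Finset.sum_eq_single σ.2.1]
    · exact gr.u_left σ _ (hc σ)
    · intro a _ hne
      refine gr.mul_eq_zero (GArrow.unit a) σ ?_ _ (gr.u_mem a) _ (hc σ)
      intro hcomp
      exact hne hcomp
    · intro hmem
      exact absurd (Finset.mem_image_of_mem _ hσ) hmem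
  calc ∑ σ ∈ s, c σ = ∑ σ ∈ s, ∑ a ∈ A, gr.u a * c σ := by
        exact Finset.sum_congr rfl fun σ hσ => (key σ hσ).symm
    _ = ∑ a ∈ A, gr.u a * ∑ σ ∈ s, c σ := by
        rw [Finset.sum_comm]
        exact Finset.sum_congr rfl fun a _ => (Finset.mul_sum _ _ _).symm
    _ = 0 := by simp [h]

/-- Right multiplication by a local unit is a graded hom of unit degree. -/
theorem mul_u_memHomDeg (a : G) :
    (fun x : R => x * gr.u a) ∈ HomDeg gr gr.component (GArrow.unit a) := by
  refine ⟨fun x y => add_mul x y _, fun r x => by show (r * x) * gr.u a = r * (x * gr.u a); rw [mul_assoc], ?_, ?_⟩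
  · rintro ⟨b, c, f⟩ h x hx
    have hb : b = a := h
    subst hb
    have : GArrow.comp ⟨b, c, f⟩ (GArrow.unit b) h = ⟨b, c, f⟩ := by
      simp [GArrow.comp, GArrow.unit]
    rw [this]
    have h2 : x * gr.u b = x := gr.u_right ⟨b, c, f⟩ x hx
    show x * gr.u b ∈ _
    rw [h2]; exact hx
  · intro τ h x hx
    exact gr.mul_eq_zero τ (GArrow.unit a) h x hx _ (gr.u_mem a)

/-- Every element of `HOM` is left `R`-linear. -/
theorem HOM_left_linear (f : R → R) (hf : f ∈ HOM gr gr.component) :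
    ∀ r x : R, f (r * x) = r * f x := by
  induction hf using AddSubgroup.closure_induction with
  | mem g hg =>
    obtain ⟨_, ⟨σ, rfl⟩, hgσ⟩ := hg
    intro r x
    have := hgσ.2.1 r x
    simpa [smul_eq_mul] using this
  | zero => intro r x; simp [Pi.zero_apply]
  | add g1 g2 _ _ h1 h2 => intro r x; simp [Pi.add_apply, h1 r x, h2 r x, mul_add]
  | neg g _ hg => intro r x; simp [Pi.neg_apply, hg r x]

theorem eta_mem_RHOM (r : R) : (fun x : R => x * r) ∈ RHOM gr gr.component := by
  have hr : r ∈ ⨆ σ : GArrow G, gr.component σ := by rw [gr.sup_eq_top]; trivial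
  rw [AddSubgroup.iSup_eq_closure] at hr
  induction hr using AddSubgroup.closure_induction with
  | mem t ht =>
    obtain ⟨_, ⟨σ, rfl⟩, htσ⟩ := ht
    have : (fun x : R => x * t) = rAct t (fun x : R => x * gr.u σ.1) := by
      funext x
      simp only [rAct, mul_assoc]
      rw [gr.u_right σ t htσ]
    rw [this]
    exact AddSubgroup.subset_closure
      ⟨t, _, AddSubgroup.subset_closure (Set.mem_iUnion.2 ⟨GArrow.unit σ.1,
        mul_u_memHomDeg gr σ.1⟩), rfl⟩
  | zero =>
    have : (fun x : R => x * (0 : R)) = (0 : R → R) := by funext x; simp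
    rw [this]; exact zero_mem _
  | add a b _ _ ha hb =>
    have : (fun x : R => x * (a + b)) =
        (fun x : R => x * a) + (fun x : R => x * b) := by
      funext x; simp [mul_add]
    rw [this]; exact add_mem ha hb
  | neg a _ ha =>
    have : (fun x : R => x * (-a)) = -(fun x : R => x * a) := by funext x; simp
    rw [this]; exact neg_mem ha

theorem RHOM_surj (f : R → R) (hf : f ∈ RHOM gr gr.component) :
    ∃ r : R, f = fun x : R => x * r := by
  have hle : RHOM gr gr.component ≤ (etaHom (R := R)).range := by
    refine AddSubgroup.closure_le _ |>.2 ?_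
    rintro g ⟨r, f', hf', rfl⟩
    refine ⟨f' r, ?_⟩
    funext x
    exact (HOM_left_linear gr f' hf' x r).symm
  obtain ⟨r, hr⟩ := hle hf
  exact ⟨r, hr.symm⟩

end Aux

/-- The map `η : R → R·END_R(R)`, `η(r)(x) = x r`, is an isomorphism
of `(R,R)`-bimodules, for the left action `(s·f)(x) = f(xs)` and the right action
`(f·s)(x) = f(x)s` on `END_R(R) = HOM_R(R,R)`. -/
theorem stmt10 {G R : Type*} [Groupoid G] [NonUnitalRing R] (gr : OUGrading G R) :
    (∀ r : R, (fun x : R => x * r) ∈ RHOM gr gr.component) ∧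
    (∀ r s : R, (fun x : R => x * (r + s)) = (fun x : R => x * r) + fun x : R => x * s) ∧
    (∀ r s : R, (fun x : R => x * (s * r)) = rAct s fun x : R => x * r) ∧
    (∀ r s : R, (fun x : R => x * (r * s)) = fun x : R => x * r * s) ∧
    Function.Injective (fun (r : R) (x : R) => x * r) ∧
    (∀ f ∈ RHOM gr gr.component, ∃ r : R, f = fun x : R => x * r) := by
  refine ⟨eta_mem_RHOM gr, ?_, ?_, ?_, ?_, RHOM_surj gr⟩
  · intro r s; funext x; simp [mul_add]
  · intro r s; funext x; simp [rAct, mul_assoc]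
  · intro r s; funext x; simp [mul_assoc]
  · intro r s h
    have hs : ∀ x : R, x * (r - s) = 0 := by
      intro x
      have := congrFun h x
      simp only at this
      rw [mul_sub, this, sub_self]
    have := eq_zero_of_forall_mul gr _ hs
    exact sub_eq_zero.mp this
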